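/- Let b ∈ ℂ, b ≠ 0, and let k ≥ 1 be an integer. For every t ∈ ℂ with |t − b| < 2|b|, the series Σ_{m=0}^{∞} (−1)^m · (k − m) · (k + m − 1)! / ((2b)^{k+m} · m! · k!) · (t − b)^m converges and its sum equals 2t/(t + b)^{k+1}. (Here k − m is taken as an integer, possibly negative.) -/

import Mathlib

open Complex

/-- The power-series expansion `2t/(t+b)^{k+1} = Σ_m q_m (t−b)^m` around `t = b`, with
`q_m = (−1)^m (k−m)(k+m−1)!/((2b)^{k+m} m! k!)`, valid for `|t − b| < 2|b|`. -/
theorem two_t_div_pow_expansion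
    (b : ℂ) (hb : b ≠ 0) (k : ℕ) (hk : 1 ≤ k)
    (t : ℂ) (ht : ‖t - b‖ < 2 * ‖b‖) :
    HasSum
      (fun m : ℕ =>
        (-1) ^ m * ((k : ℂ) - (m : ℂ)) * (((k + m - 1).factorial : ℕ) : ℂ) /
          ((2 * b) ^ (k + m) * (m.factorial : ℂ) * (k.factorial : ℂ)) * (t - b) ^ m)
      (2 * t / (t + b) ^ (k + 1)) := by
  obtain ⟨j, rfl⟩ : ∃ j, k = j + 1 := ⟨k - 1, by omega⟩
  have h2b : (2 * b : ℂ) ≠ 0 := by simp [hb]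
  have htb : t + b ≠ 0 := by
    intro h
    have h2 : t - b = -(2 * b) := by linear_combination h
    rw [h2] at ht
    simp [map_mul] at ht
  set u := t - b with hu
  set r : ℂ := -(u / (2 * b)) with hr_def
  have hr : ‖r‖ < 1 := by
    rw [hr_def, norm_neg, norm_div]
    rw [div_lt_one (norm_pos_iff.2 h2b)]
    simpa [norm_mul] using ht
  have h1mr : 1 - r = (t + b) / (2 * b) := by
    rw [hr_def, hu]
    field_simp
    ring
  set target : ℕ → ℂ := fun m : ℕ =>
        (-1) ^ m * (((j+1 : ℕ) : ℂ) - (m : ℂ)) * ((((j+1) + m - 1).factorial : ℕ) : ℂ) /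
          ((2 * b) ^ ((j+1) + m) * (m.factorial : ℂ) * ((j+1).factorial : ℂ)) * u ^ m
    with htarget
  set f₁ : ℕ → ℂ := fun m => 1 / (2 * b) ^ (j+1) * (((m + j).choose j : ℂ) * r ^ m) with hf₁
  have hjf : (j.factorial : ℂ) ≠ 0 := by exact_mod_cast Nat.factorial_ne_zero j
  have hkfact : (((j+1).factorial : ℕ) : ℂ) = ((j : ℂ) + 1) * (j.factorial : ℂ) := by
    rw [Nat.factorial_succ]; push_cast; ring
  have hA : HasSum f₁ (1 / (t + b) ^ (j+1)) := by
    have h1 := (hasSum_choose_mul_geometric_of_norm_lt_one j hr).mul_left (1 / (2 * b) ^ (j+1))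
    convert h1 using 1
    · rfl
    rw [h1mr, div_pow]
    field_simp
  set g : ℕ → ℂ := fun m => target m - f₁ m with hg
  have hg0 : g 0 = 0 := by
    have e : (j+1) + 0 - 1 = j := by omega
    simp only [hg, htarget, hf₁, e]
    rw [hkfact]
    have hj1 : ((j : ℂ) + 1) ≠ 0 := Nat.cast_add_one_ne_zero j
    field_simp
    simp only [zero_add, Nat.choose_self, Nat.factorial_zero]; push_cast
    ring
  have hBterm : ∀ m : ℕ, g (m + 1)
      = (u / (2 * b) ^ (j + 2)) * (((m + (j+1)).choose (j+1) : ℂ) * r ^ m) := by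
    intro m
    have hfm : (m.factorial : ℂ) ≠ 0 := by exact_mod_cast Nat.factorial_ne_zero m
    have hj1 : ((j : ℂ) + 1) ≠ 0 := Nat.cast_add_one_ne_zero j
    have hm1 : ((m : ℂ) + 1) ≠ 0 := Nat.cast_add_one_ne_zero m
    have hc1 : ((m + (j+1)).choose (j+1) : ℂ)
        = ((m + (j+1)).factorial : ℂ) / (((j+1).factorial : ℂ) * (m.factorial : ℂ)) := by
      rw [Nat.cast_choose ℂ (show j+1 ≤ m + (j+1) by omega), Nat.add_sub_cancel]
    have hc2 : (((m+1) + j).choose j : ℂ)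
        = ((m + (j+1)).factorial : ℂ) / ((j.factorial : ℂ) * (((m+1).factorial : ℕ) : ℂ)) := by
      rw [show (m+1) + j = m + (j+1) from by omega,
        Nat.cast_choose ℂ (show j ≤ m + (j+1) by omega),
        show m + (j+1) - j = m + 1 from by omega]
    have e1 : (j+1) + (m + 1) - 1 = m + (j+1) := by omega
    have hmfact : (((m+1).factorial : ℕ) : ℂ) = ((m : ℂ) + 1) * (m.factorial : ℂ) := by
      rw [Nat.factorial_succ]; push_cast; ring
    have hmjfact : ((m + (j+1)).factorial : ℂ) ≠ 0 := by
      exact_mod_cast Nat.factorial_ne_zero _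
    have hrm : ∀ n : ℕ, (-(u / (2 * b))) ^ n = (-1) ^ n * (u ^ n / (2 * b) ^ n) := by
      intro n; rw [neg_pow (u / (2 * b)), div_pow]
    have hfm1 : (((m+1).factorial : ℕ) : ℂ) ≠ 0 := by
      exact_mod_cast Nat.factorial_ne_zero (m+1)
    have hfk : (((j+1).factorial : ℕ) : ℂ) ≠ 0 := by
      exact_mod_cast Nat.factorial_ne_zero (j+1)
    simp only [hg, htarget, hf₁, e1, hc1, hc2, hr_def, hrm]
    field_simp
    simp only [hkfact, hmfact]
    push_cast
    ring
  have hB : HasSum g (u / (t + b) ^ (j + 2)) := by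
    have h2 := (hasSum_choose_mul_geometric_of_norm_lt_one (j+1) hr).mul_left
      (u / (2 * b) ^ (j + 2))
    have h2' : HasSum (fun m => g (m + 1)) (u / (t + b) ^ (j + 2)) := by
      convert h2 using 1
      · rfl
      · funext m; exact hBterm m
      · rw [h1mr, div_pow]
        rw [show j + 1 + 1 = j + 2 from rfl]
        field_simp
    have := (hasSum_nat_add_iff (f := g) 1).mp h2'
    simpa [Finset.sum_range_one, hg0] using this
  have hsum := hA.add hB
  have heq : (fun m => f₁ m + g m) = target := by
    funext m; simp [hg]
  rw [heq] at hsum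
  convert hsum using 1
  have : (t + b) ^ (j + 1 + 1) = (t + b) ^ (j+1) * (t + b) := pow_succ _ _
  field_simp [this]
  ring
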